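/- Let x, y ∈ (0,1) be badly approximable (∃ C>0 with |nx - r| ≥ C/n and |my - r'| ≥ C/m for all positive integers n, m and integers r, r'). For the rectangle (0,a)×(0,b) with eigenfunctions Φ_{n,m}(u,v) = (2/√(ab))·sin(nπu/a)sin(mπv/b) and eigenvalues E_{n,m} = π²(n²/a² + m²/b²), the point p = (ax, by) satisfies |Φ_{n,m}(p)|² ≥ c/E_{n,m}² for some c > 0 independent of n, m. -/

import Mathlib

open Real

lemma sin_pi_lb (t : ℝ) : 2 * |t - round t| ≤ |Real.sin (Real.pi * t)| := by
  set s : ℝ := t - round t with hs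
  have hsabs : |s| ≤ 1 / 2 := abs_sub_round t
  have h1 : |Real.sin (Real.pi * t)| = |Real.sin (Real.pi * s)| := by
    have : Real.pi * t = Real.pi * s + (round t : ℤ) * Real.pi := by ring
    rw [this, Real.sin_add_int_mul_pi, abs_mul]
    rcases Int.even_or_odd (round t) with h | h
    · rw [h.neg_one_zpow]; simp
    · rw [h.neg_one_zpow]; simp
  have h2 : |Real.sin (Real.pi * s)| = Real.sin (Real.pi * |s|) := by
    rcases le_or_gt 0 s with h | h
    · rw [abs_of_nonneg h, abs_of_nonneg]
      exact Real.sin_nonneg_of_nonneg_of_le_pi (by positivity)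
        (by nlinarith [Real.pi_pos, abs_of_nonneg h])
    · rw [abs_of_neg h]
      rw [show Real.pi * s = -(Real.pi * -s) by ring, Real.sin_neg, abs_neg, abs_of_nonneg]
      exact Real.sin_nonneg_of_nonneg_of_le_pi (by nlinarith [Real.pi_pos])
        (by nlinarith [Real.pi_pos, abs_of_neg h])
  rw [h1, h2]
  have := Real.mul_le_sin (x := Real.pi * |s|) (by positivity)
    (by nlinarith [Real.pi_pos])
  calc 2 * |s| = 2 / Real.pi * (Real.pi * |s|) := by
        field_simp
      _ ≤ Real.sin (Real.pi * |s|) := this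

theorem stmt_16 (x y : ℝ) (hx : x ∈ Set.Ioo (0 : ℝ) 1) (hy : y ∈ Set.Ioo (0 : ℝ) 1)
    (C : ℝ) (hC : 0 < C)
    (hbadx : ∀ (n : ℕ), 0 < n → ∀ r : ℤ, C / n ≤ |(n : ℝ) * x - r|)
    (hbady : ∀ (m : ℕ), 0 < m → ∀ r : ℤ, C / m ≤ |(m : ℝ) * y - r|)
    (a b : ℝ) (ha : 0 < a) (hb : 0 < b) :
    ∃ c > 0, ∀ (n m : ℕ), 0 < n → 0 < m →
      ((2 / Real.sqrt (a * b)) * Real.sin ((n : ℝ) * Real.pi * (a * x) / a)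
          * Real.sin ((m : ℝ) * Real.pi * (b * y) / b)) ^ 2
        ≥ c / (Real.pi ^ 2 * ((n : ℝ) ^ 2 / a ^ 2 + (m : ℝ) ^ 2 / b ^ 2)) ^ 2 := by
  have hpi := Real.pi_pos
  refine ⟨256 * Real.pi ^ 4 * C ^ 4 / (a ^ 3 * b ^ 3), by positivity, ?_⟩
  intro n m hn hm
  have hn' : (0 : ℝ) < n := by exact_mod_cast hn
  have hm' : (0 : ℝ) < m := by exact_mod_cast hm
  -- lower bounds for the sines
  have keyA : ∀ (k : ℕ) (z : ℝ), 0 < k → (∀ r : ℤ, C / k ≤ |(k : ℝ) * z - r|) →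
      (2 * C / k) ^ 2 ≤ Real.sin (Real.pi * ((k : ℝ) * z)) ^ 2 := by
    intro k z hk hbad
    have hk' : (0 : ℝ) < k := by exact_mod_cast hk
    have h1 : C / k ≤ |(k : ℝ) * z - round ((k : ℝ) * z)| := hbad _
    have h2 := sin_pi_lb ((k : ℝ) * z)
    have h3 : 2 * C / k ≤ |Real.sin (Real.pi * ((k : ℝ) * z))| := by
      calc 2 * C / k = 2 * (C / k) := by ring
        _ ≤ 2 * |(k : ℝ) * z - round ((k : ℝ) * z)| := by linarith
        _ ≤ _ := h2
    have h4 : (0:ℝ) ≤ 2 * C / k := by positivity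
    calc (2 * C / k) ^ 2 ≤ |Real.sin (Real.pi * ((k : ℝ) * z))| ^ 2 := by
          exact pow_le_pow_left₀ h4 h3 2
      _ = Real.sin (Real.pi * ((k : ℝ) * z)) ^ 2 := sq_abs _
  have hA := keyA n x hn (hbadx n hn)
  have hB := keyA m y hm (hbady m hm)
  -- simplify the arguments
  have hax : (n : ℝ) * Real.pi * (a * x) / a = Real.pi * ((n : ℝ) * x) := by
    field_simp
  have hby : (m : ℝ) * Real.pi * (b * y) / b = Real.pi * ((m : ℝ) * y) := by
    field_simp
  rw [hax, hby]
  have hsq : Real.sqrt (a * b) ^ 2 = a * b := Real.sq_sqrt (by positivity)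
  have hsqpos : 0 < Real.sqrt (a * b) := Real.sqrt_pos.mpr (by positivity)
  set A := Real.sin (Real.pi * ((n : ℝ) * x)) ^ 2 with hAdef
  set B := Real.sin (Real.pi * ((m : ℝ) * y)) ^ 2 with hBdef
  have hABval : ((2 / Real.sqrt (a * b)) * Real.sin (Real.pi * ((n : ℝ) * x))
      * Real.sin (Real.pi * ((m : ℝ) * y))) ^ 2 = 4 / (a * b) * A * B := by
    rw [hAdef, hBdef, mul_pow, mul_pow, div_pow, hsq]
    ring
  rw [ge_iff_le, hABval]
  -- eigenvalue bound
  have hE : 2 * Real.pi ^ 2 * n * m / (a * b) ≤ Real.pi ^ 2 * ((n : ℝ) ^ 2 / a ^ 2 + (m : ℝ) ^ 2 / b ^ 2) := by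
    have key : Real.pi ^ 2 * ((n : ℝ) ^ 2 / a ^ 2 + (m : ℝ) ^ 2 / b ^ 2)
        - 2 * Real.pi ^ 2 * n * m / (a * b)
        = Real.pi ^ 2 * ((n : ℝ) * b - (m : ℝ) * a) ^ 2 / (a ^ 2 * b ^ 2) := by
      field_simp; ring
    nlinarith [div_nonneg (mul_nonneg (sq_nonneg Real.pi) (sq_nonneg ((n : ℝ) * b - (m : ℝ) * a))) (le_of_lt (by positivity : (0:ℝ) < a ^ 2 * b ^ 2))]
  have hEpos : (0:ℝ) < 2 * Real.pi ^ 2 * n * m / (a * b) := by positivity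
  have hE2 : (2 * Real.pi ^ 2 * n * m / (a * b)) ^ 2
      ≤ (Real.pi ^ 2 * ((n : ℝ) ^ 2 / a ^ 2 + (m : ℝ) ^ 2 / b ^ 2)) ^ 2 :=
    pow_le_pow_left₀ hEpos.le hE 2
  calc 256 * Real.pi ^ 4 * C ^ 4 / (a ^ 3 * b ^ 3)
        / (Real.pi ^ 2 * ((n : ℝ) ^ 2 / a ^ 2 + (m : ℝ) ^ 2 / b ^ 2)) ^ 2
      ≤ 256 * Real.pi ^ 4 * C ^ 4 / (a ^ 3 * b ^ 3)
        / (2 * Real.pi ^ 2 * n * m / (a * b)) ^ 2 := by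
        apply div_le_div_of_nonneg_left (by positivity) (by positivity) hE2
    _ = 4 / (a * b) * ((2 * C / n) ^ 2) * ((2 * C / m) ^ 2) := by
        field_simp
        ring
    _ ≤ 4 / (a * b) * A * B := by
        have h1 : 4 / (a * b) * ((2 * C / n) ^ 2) * ((2 * C / m) ^ 2)
            ≤ 4 / (a * b) * A * ((2 * C / m) ^ 2) := by
          apply mul_le_mul_of_nonneg_right _ (by positivity)
          exact mul_le_mul_of_nonneg_left hA (by positivity)
        have h2 : 4 / (a * b) * A * ((2 * C / m) ^ 2) ≤ 4 / (a * b) * A * B := by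
          apply mul_le_mul_of_nonneg_left hB
          have : (0:ℝ) ≤ A := sq_nonneg _
          positivity
        linarith
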